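/- Let g be a strictly increasing convex distortion function, set α_j = g(j/n) for j = 0,…,n, and let j ∈ {0,…,n−2} and α ∈ [α_j, α_{j+1}] with α < 1. Then the dual norm of the scaled generalized-ES norm ⟨⟨·⟩⟩_α^{S,g} is given for every x ∈ ℝⁿ by ⟨⟨x⟩⟩_α^{S,g,*} = max{ ‖x‖₁, max_{j+2 ≤ i ≤ n} (1−α)/(1−g((i−1)/n)) Σ_{k=i}^n |x|_(k) }, where ‖x‖₁ = Σ_{i=1}^n |x_i|. -/

import Mathlib

open Finset

/-- The absolute values of the components of `x`, arranged in increasing order: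
`absSorted x i` is `|x|_(i+1)` in the paper's notation. -/
noncomputable def absSorted {n : ℕ} (x : Fin n → ℝ) : Fin n → ℝ :=
  fun i => |x (Tuple.sort (fun j => |x j|) i)|

/-- `coeff n g i = g((i+1)/n) - g(i/n)`, the paper's `c_{i+1}`. -/
noncomputable def coeff (n : ℕ) (g : ℝ → ℝ) (i : Fin n) : ℝ :=
  g (((i : ℕ) + 1 : ℝ) / n) - g (((i : ℕ) : ℝ) / n)

/-- The objective function whose infimum over `t` defines the scaled generalized-ES norm. -/
noncomputable def sgesObj {n : ℕ} (g : ℝ → ℝ) (α : ℝ) (x : Fin n → ℝ) (t : ℝ) : ℝ :=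
  t + (1 - α)⁻¹ * ∑ i, coeff n g i * max (absSorted x i - t) 0

/-- The scaled generalized-ES norm `⟨⟨x⟩⟩_α^{S,g}`. -/
noncomputable def sges {n : ℕ} (g : ℝ → ℝ) (α : ℝ) (x : Fin n → ℝ) : ℝ :=
  ⨅ t : ℝ, sgesObj g α x t

/-- The non-scaled generalized-ES norm `⟨⟨x⟩⟩_α^{g} = n(1-α)⟨⟨x⟩⟩_α^{S,g}`. -/
noncomputable def nges {n : ℕ} (g : ℝ → ℝ) (α : ℝ) (x : Fin n → ℝ) : ℝ :=
  (n : ℝ) * (1 - α) * sges g α x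

/-- The dual norm of a (norm) functional `N` on `ℝⁿ`. -/
noncomputable def dualNorm {n : ℕ} (N : (Fin n → ℝ) → ℝ) (y : Fin n → ℝ) : ℝ :=
  sSup {r : ℝ | ∃ x : Fin n → ℝ, N x ≤ 1 ∧ r = ∑ i, x i * y i}

/-- The ordered weighted L1 (OWL) norm. -/
noncomputable def owl {n : ℕ} (w : Fin n → ℝ) (x : Fin n → ℝ) : ℝ :=
  ∑ i, w i * absSorted x i

section helpers

lemma my_absSorted_nonneg {n : ℕ} (x : Fin n → ℝ) (i : Fin n) : 0 ≤ absSorted x i :=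
  abs_nonneg _

lemma my_absSorted_mono {n : ℕ} (x : Fin n → ℝ) : Monotone (absSorted x) :=
  Tuple.monotone_sort (fun j => |x j|)

lemma my_sum_absSorted {n : ℕ} (x : Fin n → ℝ) : ∑ k, absSorted x k = ∑ m, |x m| :=
  Equiv.sum_comp (Tuple.sort (fun j => |x j|)) (fun m => |x m|)

lemma my_pairing {n : ℕ} (x z : Fin n → ℝ) :
    ∑ m, z m * x m ≤ ∑ k, absSorted x k * absSorted z k := by
  have h1 : ∑ m, z m * x m ≤ ∑ m, |x m| * |z m| := by
    apply Finset.sum_le_sum; intro m _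
    calc z m * x m ≤ |z m * x m| := le_abs_self _
    _ = |x m| * |z m| := by rw [abs_mul, mul_comm]
  refine h1.trans ?_
  set σ := Tuple.sort (fun j => |x j|) with hσ
  set τ := Tuple.sort (fun j => |z j|) with hτ
  have h2 : ∑ m, |x m| * |z m| = ∑ k, absSorted x k * absSorted z ((σ.trans τ.symm) k) := by
    rw [← Equiv.sum_comp σ (fun m => |x m| * |z m|)]
    apply Finset.sum_congr rfl
    intro k _
    simp only [absSorted, ← hσ, ← hτ, Equiv.trans_apply, Equiv.apply_symm_apply]
  rw [h2]
  have hmono : Monovary (absSorted x) (absSorted z) := fun i j h =>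
    (my_absSorted_mono x) ((my_absSorted_mono z).reflect_lt h).le
  exact hmono.sum_mul_comp_perm_le_sum_mul

lemma my_sum_filter {n : ℕ} (i : ℕ) (F : ℕ → ℝ) :
    ∑ k ∈ Finset.univ.filter (fun k : Fin n => i ≤ (k : ℕ)), F (k : ℕ)
      = ∑ k ∈ Finset.Ico i n, F k := by
  rw [Finset.sum_filter, Fin.sum_univ_eq_sum_range (fun m => if i ≤ m then F m else 0) n,
    ← Finset.sum_filter]
  congr 1
  ext m
  simp only [Finset.mem_filter, Finset.mem_range, Finset.mem_Ico]
  tauto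

lemma my_abel {n : ℕ} (a c d : ℕ → ℝ) (K : ℝ)
    (hd0 : 0 ≤ d 0) (hdm : ∀ i, i + 1 < n → d i ≤ d (i + 1))
    (h : ∀ i < n, ∑ k ∈ Finset.Ico i n, a k ≤ K * ∑ k ∈ Finset.Ico i n, c k) :
    ∑ k ∈ Finset.range n, a k * d k ≤ K * ∑ k ∈ Finset.range n, c k * d k := by
  set e : ℕ → ℝ := fun i => if i = 0 then d 0 else d i - d (i - 1) with he
  have hde : ∀ k, d k = ∑ i ∈ Finset.range (k + 1), e i := by
    intro k
    induction k with
    | zero => simp [he]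
    | succ k ih =>
      rw [Finset.sum_range_succ, ← ih]
      simp only [he, Nat.succ_ne_zero, if_false, Nat.add_sub_cancel]
      ring
  have key : ∀ f : ℕ → ℝ, ∑ k ∈ Finset.range n, f k * d k
      = ∑ i ∈ Finset.range n, e i * ∑ k ∈ Finset.Ico i n, f k := by
    intro f
    calc ∑ k ∈ Finset.range n, f k * d k
        = ∑ k ∈ Finset.Ico 0 n, ∑ i ∈ Finset.Ico 0 (k + 1), e i * f k := by
          rw [← Finset.range_eq_Ico]
          apply Finset.sum_congr rfl
          intro k _
          rw [hde k, Finset.range_eq_Ico, Finset.mul_sum]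
          exact Finset.sum_congr rfl fun i _ => mul_comm _ _
      _ = ∑ i ∈ Finset.Ico 0 n, ∑ k ∈ Finset.Ico i n, e i * f k :=
          (Finset.sum_Ico_Ico_comm 0 n fun i k => e i * f k).symm
      _ = ∑ i ∈ Finset.range n, e i * ∑ k ∈ Finset.Ico i n, f k := by
          rw [← Finset.range_eq_Ico]
          exact Finset.sum_congr rfl fun i _ => (Finset.mul_sum _ _ _).symm
  rw [key a, key c, Finset.mul_sum]
  apply Finset.sum_le_sum
  intro i hi
  have hei : 0 ≤ e i := by
    rcases Nat.eq_zero_or_pos i with h0 | h0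
    · simpa [he, h0] using hd0
    · have hlt : (i - 1) + 1 < n := by
        have := Finset.mem_range.mp hi; omega
      have hd := hdm (i - 1) hlt
      have hi1 : i - 1 + 1 = i := by omega
      rw [hi1] at hd
      simp only [he, Nat.pos_iff_ne_zero.mp h0, if_false]
      linarith
  calc e i * ∑ k ∈ Finset.Ico i n, a k
      ≤ e i * (K * ∑ k ∈ Finset.Ico i n, c k) :=
        mul_le_mul_of_nonneg_left (h i (Finset.mem_range.mp hi)) hei
    _ = K * (e i * ∑ k ∈ Finset.Ico i n, c k) := by ring

lemma my_sgesObj_nonneg {n : ℕ} (g : ℝ → ℝ) (α : ℝ) (hα1 : α < 1) (hα0 : 0 ≤ α)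
    (x : Fin n → ℝ) (hc : ∀ k : Fin n, 0 ≤ coeff n g k) (hs : ∑ k, coeff n g k = 1)
    (t : ℝ) : 0 ≤ sgesObj g α x t := by
  have h1α : 0 < 1 - α := by linarith
  have hinv : 1 ≤ (1 - α)⁻¹ := by
    rw [le_inv_comm₀ one_pos h1α]; linarith
  rcases le_or_gt 0 t with ht | ht
  · have h1 : 0 ≤ ∑ i, coeff n g i * max (absSorted x i - t) 0 :=
      Finset.sum_nonneg fun i _ => mul_nonneg (hc i) (le_max_right _ _)
    have h2 := mul_nonneg (inv_nonneg.mpr h1α.le) h1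
    simp only [sgesObj]; linarith
  · have hsum : (-t) ≤ ∑ i, coeff n g i * max (absSorted x i - t) 0 := by
      calc (-t) = ∑ i, coeff n g i * (-t) := by rw [← Finset.sum_mul, hs, one_mul]
      _ ≤ ∑ i, coeff n g i * max (absSorted x i - t) 0 := by
          apply Finset.sum_le_sum
          intro i _
          apply mul_le_mul_of_nonneg_left _ (hc i)
          exact le_max_of_le_left (by linarith [my_absSorted_nonneg x i])
    have h2 : (1 - α)⁻¹ * (-t) ≤ (1 - α)⁻¹ * ∑ i, coeff n g i * max (absSorted x i - t) 0 :=
      mul_le_mul_of_nonneg_left hsum (inv_nonneg.mpr h1α.le)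
    simp only [sgesObj]
    nlinarith

noncomputable def myF (n : ℕ) (g : ℝ → ℝ) (m : ℕ) : ℝ := g ((m : ℝ) / n)

noncomputable def myCN (n : ℕ) (g : ℝ → ℝ) (m : ℕ) : ℝ := myF n g (m + 1) - myF n g m

noncomputable def myAN {n : ℕ} (x : Fin n → ℝ) (m : ℕ) : ℝ :=
  if h : m < n then absSorted x ⟨m, h⟩ else 0

lemma my_coeff_eq (n : ℕ) (g : ℝ → ℝ) (k : Fin n) : coeff n g k = myCN n g (k : ℕ) := by
  simp only [coeff, myCN, myF]
  push_cast
  ring_nf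

lemma my_cN_tail (n : ℕ) (g : ℝ → ℝ) (hg1 : g 1 = 1) (hn : n ≠ 0) {i : ℕ} (hi : i ≤ n) :
    ∑ k ∈ Finset.Ico i n, myCN n g k = 1 - myF n g i := by
  simp only [myCN]
  rw [Finset.sum_Ico_eq_sub _ hi, Finset.sum_range_sub (myF n g), Finset.sum_range_sub (myF n g)]
  have h1 : myF n g n = 1 := by
    simp only [myF]
    rw [div_self (by exact_mod_cast hn), hg1]
  rw [h1]; ring

lemma my_AN_eq {n : ℕ} (x : Fin n → ℝ) (k : Fin n) : absSorted x k = myAN x (k : ℕ) := by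
  simp [myAN, k.isLt]

end helpers

/-- dual norm of the scaled generalized-ES norm for a strictly
increasing convex distortion function and `α ∈ [α_j, α_{j+1}]`, `j = 0,…,n-2`,
`α < 1`:
`⟨⟨x⟩⟩* = max{ ‖x‖₁, max_{j+2 ≤ i ≤ n} (1-α)/(1-g((i-1)/n)) ∑_{k=i}^n |x|₍ₖ₎ }`
(the paper's 1-based index `i ∈ {j+2,…,n}` is the 0-based index `i ∈ {j+1,…,n-1}`,
so `g((i-1)/n)` becomes `g(i/n)` with the 0-based `i`). -/


theorem stmt17 (n : ℕ) (hn : 1 ≤ n) (g : ℝ → ℝ)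
    (hg_mono : StrictMonoOn g (Set.Icc 0 1)) (hg_conv : ConvexOn ℝ (Set.Icc 0 1) g)
    (hg0 : g 0 = 0) (hg1 : g 1 = 1)
    (j : ℕ) (hj : j + 2 ≤ n) (α : ℝ)
    (hα1 : g ((j : ℝ) / n) ≤ α) (hα2 : α ≤ g (((j : ℝ) + 1) / n)) (hα3 : α < 1)
    (x : Fin n → ℝ) :
    dualNorm (sges g α) x
      = max (∑ i, |x i|)
          (⨆ i : {i : Fin n // j + 1 ≤ (i : ℕ)},
            (1 - α) / (1 - g (((i.1 : ℕ) : ℝ) / n)) *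
              ∑ k ∈ Finset.univ.filter (fun k : Fin n => (i.1 : ℕ) ≤ (k : ℕ)),
                absSorted x k) := by
  classical
  have hn0 : (0 : ℝ) < n := by exact_mod_cast Nat.pos_of_ne_zero (by omega)
  have hmem : ∀ m : ℕ, m ≤ n → ((m : ℝ) / n) ∈ Set.Icc (0 : ℝ) 1 := by
    intro m hm
    constructor
    · positivity
    · rw [div_le_one hn0]; exact_mod_cast hm
  have hgm : MonotoneOn g (Set.Icc 0 1) := hg_mono.monotoneOn
  have hf_mono : ∀ p q : ℕ, p ≤ q → q ≤ n → myF n g p ≤ myF n g q := by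
    intro p q hpq hq
    apply hgm (hmem p (hpq.trans hq)) (hmem q hq)
    have hpq2 : (p : ℝ) ≤ q := by exact_mod_cast hpq
    gcongr
  have hfn : myF n g n = 1 := by
    simp only [myF]; rw [div_self hn0.ne', hg1]
  have hf0 : myF n g 0 = 0 := by simp [myF, hg0]
  have hα1' : myF n g j ≤ α := hα1
  have hα2' : α ≤ myF n g (j + 1) := by
    simp only [myF]; push_cast; exact hα2
  have hα0 : 0 ≤ α := by
    have h := hf_mono 0 j (Nat.zero_le _) (by omega)
    rw [hf0] at h; linarith
  have h1α : 0 < 1 - α := by linarith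
  have hc_nonneg : ∀ k : Fin n, 0 ≤ coeff n g k := by
    intro k
    rw [my_coeff_eq n g k]
    have h := hf_mono (k : ℕ) ((k : ℕ) + 1) (Nat.le_succ _) k.isLt
    simp only [myCN]; linarith
  have hcsum : ∑ k : Fin n, coeff n g k = 1 := by
    calc ∑ k : Fin n, coeff n g k = ∑ k : Fin n, myCN n g (k : ℕ) :=
          Finset.sum_congr rfl fun k _ => my_coeff_eq n g k
    _ = ∑ k ∈ Finset.range n, myCN n g k := Fin.sum_univ_eq_sum_range (myCN n g) n
    _ = 1 := by
        rw [Finset.range_eq_Ico, my_cN_tail n g hg1 (by omega) (Nat.zero_le n), hf0]; ring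
  have hbdd : ∀ z : Fin n → ℝ, BddBelow (Set.range (sgesObj g α z)) := by
    intro z
    exact ⟨0, by rintro r ⟨t, rfl⟩; exact my_sgesObj_nonneg g α hα3 hα0 z hc_nonneg hcsum t⟩
  haveI hne : Nonempty {i : Fin n // j + 1 ≤ (i : ℕ)} := ⟨⟨⟨j + 1, by omega⟩, by simp⟩⟩
  set T : {i : Fin n // j + 1 ≤ (i : ℕ)} → ℝ := fun i =>
    (1 - α) / (1 - g (((i.1 : ℕ) : ℝ) / n)) *
      ∑ k ∈ Finset.univ.filter (fun k : Fin n => (i.1 : ℕ) ≤ (k : ℕ)), absSorted x k with hTdef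
  set M : ℝ := max (∑ i, |x i|) (⨆ i, T i) with hMdef
  have hM1 : ∑ k : Fin n, absSorted x k ≤ M := by
    rw [my_sum_absSorted]; exact le_max_left _ _
  have hMnn : 0 ≤ M :=
    le_trans (Finset.sum_nonneg fun k _ => my_absSorted_nonneg x k) hM1
  have hTM : ∀ i, T i ≤ M :=
    fun i => le_trans (le_ciSup (Finite.bddAbove_range T) i) (le_max_right _ _)
  have hfi_lt1 : ∀ i : ℕ, i < n → myF n g i < 1 := by
    intro i hi
    rw [← hfn]
    apply hg_mono (hmem i hi.le) (hmem n le_rfl)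
    have hi2 : (i : ℝ) < n := by exact_mod_cast hi
    gcongr
  have hgf : ∀ i : Fin n, g (((i : ℕ) : ℝ) / n) = myF n g (i : ℕ) := fun i => rfl
  -- tail bounds coming from the supremum part of M
  have htailT : ∀ i : Fin n, j + 1 ≤ (i : ℕ) →
      ∑ k ∈ Finset.univ.filter (fun k : Fin n => (i : ℕ) ≤ (k : ℕ)), absSorted x k
        ≤ M * (1 - myF n g (i : ℕ)) / (1 - α) := by
    intro i hi
    have h1 : 0 < 1 - myF n g (i : ℕ) := by linarith [hfi_lt1 (i : ℕ) i.isLt]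
    have hT := hTM ⟨i, hi⟩
    rw [hTdef] at hT
    simp only [hgf i] at hT
    set S0 := ∑ k ∈ Finset.univ.filter (fun k : Fin n => (i : ℕ) ≤ (k : ℕ)), absSorted x k
      with hS0
    calc S0 = ((1 - α) / (1 - myF n g (i : ℕ)) * S0) * ((1 - myF n g (i : ℕ)) / (1 - α)) := by
          field_simp
      _ ≤ M * ((1 - myF n g (i : ℕ)) / (1 - α)) :=
          mul_le_mul_of_nonneg_right hT (by positivity)
      _ = M * (1 - myF n g (i : ℕ)) / (1 - α) := (mul_div_assoc _ _ _).symm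
  -- the key per-tail inequality, ℕ-indexed
  have hkey : ∀ i, i < n → ∑ k ∈ Finset.Ico i n, myAN x k
      ≤ (M / (1 - α)) * ∑ k ∈ Finset.Ico i n, myCN n g k := by
    intro i hi
    rw [my_cN_tail n g hg1 (by omega) hi.le]
    have hconva : ∑ k ∈ Finset.Ico i n, myAN x k
        = ∑ k ∈ Finset.univ.filter (fun k : Fin n => i ≤ (k : ℕ)), absSorted x k := by
      rw [← my_sum_filter i (myAN x)]
      exact Finset.sum_congr rfl fun k _ => (my_AN_eq x k).symm
    rw [hconva]
    rcases le_or_gt (j + 1) i with hcase | hcase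
    · have h := htailT ⟨i, hi⟩ hcase
      calc ∑ k ∈ Finset.univ.filter (fun k : Fin n => i ≤ (k : ℕ)), absSorted x k
          ≤ M * (1 - myF n g i) / (1 - α) := h
        _ = M / (1 - α) * (1 - myF n g i) := by ring
    · have hfiα : myF n g i ≤ α := le_trans (hf_mono i j (by omega) (by omega)) hα1'
      calc ∑ k ∈ Finset.univ.filter (fun k : Fin n => i ≤ (k : ℕ)), absSorted x k
          ≤ ∑ k : Fin n, absSorted x k :=
            Finset.sum_le_sum_of_subset_of_nonneg (Finset.filter_subset _ _)
              (fun k _ _ => my_absSorted_nonneg x k)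
        _ ≤ M := hM1
        _ ≤ M / (1 - α) * (1 - myF n g i) := by
            rw [div_mul_eq_mul_div, le_div_iff₀ h1α]
            nlinarith
  -- upper bound: every element of the dual ball pairs to at most M
  have hub : ∀ z : Fin n → ℝ, sges g α z ≤ 1 → ∑ m, z m * x m ≤ M := by
    intro z hz
    have hbnn : ∀ k : Fin n, 0 ≤ absSorted z k := my_absSorted_nonneg z
    have hpt : ∀ t : ℝ, 0 ≤ t →
        ∑ k : Fin n, absSorted x k * absSorted z k ≤ M * sgesObj g α z t := by
      intro t ht
      have hsplit : ∑ k : Fin n, absSorted x k * absSorted z k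
          = (∑ k : Fin n, absSorted x k * min (absSorted z k) t)
            + ∑ k : Fin n, absSorted x k * max (absSorted z k - t) 0 := by
        rw [← Finset.sum_add_distrib]
        apply Finset.sum_congr rfl
        intro k _
        rcases le_total (absSorted z k) t with h | h
        · rw [min_eq_left h, max_eq_right (by linarith)]; ring
        · rw [min_eq_right h, max_eq_left (by linarith)]; ring
      have h1 : ∑ k : Fin n, absSorted x k * min (absSorted z k) t ≤ M * t := by
        calc ∑ k : Fin n, absSorted x k * min (absSorted z k) t
            ≤ ∑ k : Fin n, absSorted x k * t :=
              Finset.sum_le_sum fun k _ =>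
                mul_le_mul_of_nonneg_left (min_le_right _ _) (my_absSorted_nonneg x k)
          _ = (∑ k : Fin n, absSorted x k) * t := (Finset.sum_mul _ _ _).symm
          _ ≤ M * t := mul_le_mul_of_nonneg_right hM1 ht
      have h2 : ∑ k : Fin n, absSorted x k * max (absSorted z k - t) 0
          ≤ M / (1 - α) * ∑ k : Fin n, coeff n g k * max (absSorted z k - t) 0 := by
        have l1 : ∑ k : Fin n, absSorted x k * max (absSorted z k - t) 0
            = ∑ k ∈ Finset.range n, myAN x k * max (myAN z k - t) 0 := by
          rw [← Fin.sum_univ_eq_sum_range (fun m => myAN x m * max (myAN z m - t) 0) n]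
          exact Finset.sum_congr rfl fun k _ => by rw [my_AN_eq x k, my_AN_eq z k]
        have l2 : ∑ k : Fin n, coeff n g k * max (absSorted z k - t) 0
            = ∑ k ∈ Finset.range n, myCN n g k * max (myAN z k - t) 0 := by
          rw [← Fin.sum_univ_eq_sum_range (fun m => myCN n g m * max (myAN z m - t) 0) n]
          exact Finset.sum_congr rfl fun k _ => by rw [my_coeff_eq n g k, my_AN_eq z k]
        rw [l1, l2]
        apply my_abel (myAN x) (myCN n g) (fun m => max (myAN z m - t) 0) (M / (1 - α))
        · exact le_max_right _ _
        · intro i hi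
          apply max_le_max _ le_rfl
          apply sub_le_sub_right
          simp only [myAN, dif_pos (by omega : i < n), dif_pos hi]
          exact my_absSorted_mono z (by simp [Fin.mk_le_mk])
        · exact hkey
      calc ∑ k : Fin n, absSorted x k * absSorted z k
          ≤ M * t + M / (1 - α) * ∑ k : Fin n, coeff n g k * max (absSorted z k - t) 0 := by
            rw [hsplit]; exact add_le_add h1 h2
        _ = M * sgesObj g α z t := by
            simp only [sgesObj]
            field_simp
    have hpt' : ∀ t : ℝ, ∑ k : Fin n, absSorted x k * absSorted z k ≤ M * sgesObj g α z t := by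
      intro t
      rcases le_or_gt 0 t with ht | ht
      · exact hpt t ht
      · have h0 := hpt 0 le_rfl
        have hmono0 : sgesObj g α z 0 ≤ sgesObj g α z t := by
          have hs1 : ∑ i, coeff n g i * max (absSorted z i - t) 0
              = (∑ i, coeff n g i * absSorted z i) - t := by
            have : ∀ k : Fin n, coeff n g k * max (absSorted z k - t) 0
                = coeff n g k * absSorted z k - coeff n g k * t := by
              intro k
              rw [max_eq_left (by linarith [hbnn k])]
              ring
            rw [Finset.sum_congr rfl fun k _ => this k, Finset.sum_sub_distrib,
              ← Finset.sum_mul, hcsum, one_mul]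
          have hs0 : ∑ i, coeff n g i * max (absSorted z i - 0) 0
              = ∑ i, coeff n g i * absSorted z i := by
            apply Finset.sum_congr rfl
            intro k _
            rw [sub_zero, max_eq_left (hbnn k)]
          have hinv : 1 ≤ (1 - α)⁻¹ := by
            rw [le_inv_comm₀ one_pos h1α]; linarith
          simp only [sgesObj, hs1, hs0]
          nlinarith
        calc ∑ k : Fin n, absSorted x k * absSorted z k ≤ M * sgesObj g α z 0 := h0
          _ ≤ M * sgesObj g α z t := mul_le_mul_of_nonneg_left hmono0 hMnn
    have hzx : ∑ m, z m * x m ≤ ∑ k : Fin n, absSorted x k * absSorted z k := my_pairing x z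
    rcases eq_or_lt_of_le hMnn with hM0 | hM0
    · have hsum0 : ∑ k : Fin n, absSorted x k = 0 := by
        have h := hM1
        rw [← hM0] at h
        exact le_antisymm h (Finset.sum_nonneg fun k _ => my_absSorted_nonneg x k)
      have hall := (Finset.sum_eq_zero_iff_of_nonneg
        (fun k _ => my_absSorted_nonneg x k)).mp hsum0
      have hP0 : ∑ k : Fin n, absSorted x k * absSorted z k = 0 :=
        Finset.sum_eq_zero fun k hk => by rw [hall k hk, zero_mul]
      rw [hP0] at hzx
      linarith
    · set P := ∑ k : Fin n, absSorted x k * absSorted z k with hP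
      have hdiv : P / M ≤ sges g α z := by
        apply le_ciInf
        intro t
        rw [div_le_iff₀ hM0]
        calc P ≤ M * sgesObj g α z t := hpt' t
          _ = sgesObj g α z t * M := mul_comm _ _
      have hPM : P ≤ M * sges g α z := by
        rwa [div_le_iff₀ hM0, mul_comm] at hdiv
      have hfin : M * sges g α z ≤ M * 1 := mul_le_mul_of_nonneg_left hz hMnn
      rw [mul_one] at hfin
      linarith
  -- membership of the ℓ¹ value
  have hmemS1 : ∃ z : Fin n → ℝ, sges g α z ≤ 1 ∧ (∑ m, |x m|) = ∑ m, z m * x m := by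
    refine ⟨fun m => if x m < 0 then -1 else 1, ?_, ?_⟩
    · have habs : ∀ k, absSorted (fun m => if x m < 0 then (-1 : ℝ) else 1) k = 1 := by
        intro k
        simp only [absSorted]
        split_ifs <;> norm_num
      have hobj : sgesObj g α (fun m => if x m < 0 then (-1 : ℝ) else 1) 1 = 1 := by
        simp only [sgesObj, habs, sub_self]
        simp
      calc sges g α _ ≤ sgesObj g α (fun m => if x m < 0 then (-1 : ℝ) else 1) 1 :=
            ciInf_le (hbdd _) 1
        _ = 1 := hobj
    · apply Finset.sum_congr rfl
      intro m _
      have hb : (fun m => if x m < 0 then (-1 : ℝ) else 1) m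
          = if x m < 0 then (-1 : ℝ) else 1 := rfl
      rw [hb]
      rcases lt_or_ge (x m) 0 with h | h
      · rw [if_pos h, abs_of_neg h]; ring
      · rw [if_neg (not_lt.mpr h), abs_of_nonneg h]; ring
  -- membership of each supremum value
  have hmemS2 : ∀ i0 : {i : Fin n // j + 1 ≤ (i : ℕ)},
      ∃ z : Fin n → ℝ, sges g α z ≤ 1 ∧ T i0 = ∑ m, z m * x m := by
    rintro ⟨i, hi⟩
    have hfi_lt : myF n g (i : ℕ) < 1 := hfi_lt1 _ i.isLt
    have hfige : α ≤ myF n g (i : ℕ) := hα2'.trans (hf_mono (j + 1) i hi i.isLt.le)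
    have h1fi : 0 < 1 - myF n g (i : ℕ) := by linarith
    set c' : ℝ := (1 - α) / (1 - myF n g (i : ℕ)) with hc'
    have hc'pos : 0 < c' := div_pos h1α h1fi
    set σ := Tuple.sort (fun m : Fin n => |x m|) with hσdef
    set s : Fin n → ℝ := fun k => if (i : ℕ) ≤ (k : ℕ) then c' else 0 with hsdef
    set z : Fin n → ℝ := fun m =>
      if (i : ℕ) ≤ ((σ.symm m : Fin n) : ℕ) then (if x m < 0 then -c' else c') else 0 with hzdef
    have hzabs : (fun m => |z m|) = s ∘ ⇑σ.symm := by
      funext m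
      simp only [hzdef, hsdef, Function.comp_apply]
      split_ifs <;> simp [abs_of_pos hc'pos]
    have hsmono : Monotone s := by
      intro p q hpq
      have hpq' : (p : ℕ) ≤ (q : ℕ) := hpq
      simp only [hsdef]
      split_ifs <;> first | exact le_rfl | exact hc'pos.le | omega
    have hs_nonneg : ∀ k, 0 ≤ s k := fun k => by
      simp only [hsdef]; split_ifs; exacts [hc'pos.le, le_rfl]
    have hzs : absSorted z = s := by
      have h1 : absSorted z = (fun m => |z m|) ∘ ⇑(Tuple.sort (fun m => |z m|)) := rfl
      set τ := Tuple.sort (fun m => |z m|) with hτdef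
      have htau : Monotone ((fun m => |z m|) ∘ ⇑τ) := Tuple.monotone_sort _
      have h2 : (fun m => |z m|) ∘ ⇑τ = s ∘ ⇑(τ.trans σ.symm) := by
        rw [hzabs]; rfl
      have hm1 : Monotone (s ∘ ⇑(τ.trans σ.symm)) := by rw [← h2]; exact htau
      have hm2 : Monotone (s ∘ ⇑(Equiv.refl (Fin n))) := by
        simpa using hsmono
      have huniq := Tuple.unique_monotone hm1 hm2
      rw [h1, h2, huniq]
      simp
    have hobj0 : sgesObj g α z 0 = 1 := by
      simp only [sgesObj, hzs, sub_zero]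
      have hterm : ∀ k : Fin n, coeff n g k * max (s k) 0
          = (if (i : ℕ) ≤ (k : ℕ) then myCN n g (k : ℕ) * c' else 0) := by
        intro k
        rw [max_eq_left (hs_nonneg k), my_coeff_eq n g k]
        simp only [hsdef]
        split_ifs <;> simp
      rw [Finset.sum_congr rfl fun k _ => hterm k, ← Finset.sum_filter]
      have hsum2 : ∑ k ∈ Finset.univ.filter (fun k : Fin n => (i : ℕ) ≤ (k : ℕ)),
          myCN n g (k : ℕ) * c' = (∑ k ∈ Finset.Ico (i : ℕ) n, myCN n g k) * c' := by
        rw [← Finset.sum_mul]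
        congr 1
        exact my_sum_filter (i : ℕ) (myCN n g)
      rw [hsum2, my_cN_tail n g hg1 (by omega) i.isLt.le, hc']
      field_simp
      norm_num
    have hzle : sges g α z ≤ 1 := by
      calc sges g α z ≤ sgesObj g α z 0 := ciInf_le (hbdd z) 0
        _ = 1 := hobj0
    refine ⟨z, hzle, ?_⟩
    have hval : ∑ m, z m * x m
        = c' * ∑ k ∈ Finset.univ.filter (fun k : Fin n => (i : ℕ) ≤ (k : ℕ)), absSorted x k := by
      rw [← Equiv.sum_comp σ (fun m => z m * x m)]
      have hterm : ∀ k : Fin n, z (σ k) * x (σ k)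
          = if (i : ℕ) ≤ (k : ℕ) then c' * absSorted x k else 0 := by
        intro k
        have habs : absSorted x k = |x (σ k)| := rfl
        simp only [hzdef, Equiv.symm_apply_apply]
        split_ifs with h1 h2
        · rw [habs, abs_of_neg h2]; ring
        · rw [habs, abs_of_nonneg (not_lt.mp h2)]
        · rw [zero_mul]
      calc ∑ k : Fin n, z (σ k) * x (σ k)
          = ∑ k : Fin n, (if (i : ℕ) ≤ (k : ℕ) then c' * absSorted x k else 0) :=
            Finset.sum_congr rfl fun k _ => hterm k
        _ = ∑ k ∈ Finset.univ.filter (fun k : Fin n => (i : ℕ) ≤ (k : ℕ)),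
              c' * absSorted x k := (Finset.sum_filter _ _).symm
        _ = c' * ∑ k ∈ Finset.univ.filter (fun k : Fin n => (i : ℕ) ≤ (k : ℕ)),
              absSorted x k := (Finset.mul_sum _ _ _).symm
    rw [hTdef, hval]
    simp only [hgf i, hc']
  -- assemble
  have hsetE : dualNorm (sges g α) x
      = sSup {r : ℝ | ∃ z : Fin n → ℝ, sges g α z ≤ 1 ∧ r = ∑ m, z m * x m} := rfl
  have hub' : ∀ r ∈ {r : ℝ | ∃ z : Fin n → ℝ, sges g α z ≤ 1 ∧ r = ∑ m, z m * x m}, r ≤ M := by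
    rintro r ⟨z, hz, rfl⟩
    exact hub z hz
  have hS1 : (∑ m, |x m|) ∈ {r : ℝ | ∃ z : Fin n → ℝ, sges g α z ≤ 1 ∧ r = ∑ m, z m * x m} := by
    obtain ⟨z, h1, h2⟩ := hmemS1
    exact ⟨z, h1, h2⟩
  have hS2 : ∀ i0 : {i : Fin n // j + 1 ≤ (i : ℕ)},
      T i0 ∈ {r : ℝ | ∃ z : Fin n → ℝ, sges g α z ≤ 1 ∧ r = ∑ m, z m * x m} := by
    intro i0
    obtain ⟨z, h1, h2⟩ := hmemS2 i0
    exact ⟨z, h1, h2⟩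
  rw [hsetE]
  apply le_antisymm
  · exact csSup_le ⟨_, hS1⟩ hub'
  · apply max_le
    · exact le_csSup ⟨M, hub'⟩ hS1
    · exact ciSup_le fun i0 => le_csSup ⟨M, hub'⟩ (hS2 i0)
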